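/- For any bound B ≥ y(s), there exists an s-t path P* with Val(P*) ≤ B minimizing ℓ(P) among all s-t paths P with Val(P) ≤ B; moreover, the modified Dijkstra relaxation—relaxing edge uv from u only if d(u) + ℓ(uv) ≤ d(v) and d(u) + s_u^{-uv} ≤ B—computes d(t) = min{ℓ(P) : P ∈ P_{s,t}, Val(P) ≤ B}. -/

import Mathlib

open scoped ENNReal

noncomputable section

/-- The length of a walk w.r.t. edge weights `ℓ`. -/
def wlen {V : Type*} {G : SimpleGraph V} (ℓ : Sym2 V → ℝ≥0∞) {u v : V} (p : G.Walk u v) : ℝ≥0∞ :=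
  (p.edges.map ℓ).sum

/-- Weighted shortest-path distance in `G`. -/
def wdist {V : Type*} (G : SimpleGraph V) (ℓ : Sym2 V → ℝ≥0∞) (u v : V) : ℝ≥0∞ :=
  ⨅ p : G.Walk u v, wlen ℓ p

/-- `s_u^{-e}`: the shortest `u`-`t` distance in `G` with edge `e` removed. -/
def sval {V : Type*} (G : SimpleGraph V) (ℓ : Sym2 V → ℝ≥0∞) (t : V) (e : Sym2 V) (u : V) :
    ℝ≥0∞ :=
  wdist (G.deleteEdges {e}) ℓ u t

/-- The supremum, over edges `uu'` of the walk (u nearer the start), of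
`ℓ(P[v,u]) + s_u^{-uu'}`. -/
def detourSup {V : Type*} (G : SimpleGraph V) (ℓ : Sym2 V → ℝ≥0∞) (t : V) :
    ∀ {v : V}, G.Walk v t → ℝ≥0∞
  | _, SimpleGraph.Walk.nil => 0
  | v, @SimpleGraph.Walk.cons _ _ _ w _ _h p =>
      max (sval G ℓ t s(v, w) v) (ℓ s(v, w) + detourSup G ℓ t p)

/-- The robust length `Val(P)` of a `v`-`t` walk `P`. -/
def rVal {V : Type*} (G : SimpleGraph V) (ℓ : Sym2 V → ℝ≥0∞) (t : V) {v : V}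
    (p : G.Walk v t) : ℝ≥0∞ :=
  max (wlen ℓ p) (detourSup G ℓ t p)

/-- The potential `y(v)`: minimum robust length over all simple `v`-`t` paths. -/
def pot {V : Type*} (G : SimpleGraph V) (ℓ : Sym2 V → ℝ≥0∞) (t v : V) : ℝ≥0∞ :=
  ⨅ p : {p : G.Walk v t // p.IsPath}, rVal G ℓ t p.1

section Aux

variable {V : Type*} [DecidableEq V] {G : SimpleGraph V} {ℓ : Sym2 V → ℝ≥0∞} {t : V}

lemma takeUntil_start' {v w : V} (p : G.Walk v w) (h : v ∈ p.support) :
    p.takeUntil v h = .nil := by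
  cases p with
  | nil => simp [SimpleGraph.Walk.takeUntil]
  | cons r q => simp [SimpleGraph.Walk.takeUntil]

lemma takeUntil_cons_ne' {v w u x : V} (r : G.Adj v x) (p : G.Walk x w)
    (h : u ∈ (SimpleGraph.Walk.cons r p).support) (hne : v ≠ u) (h' : u ∈ p.support) :
    (SimpleGraph.Walk.cons r p).takeUntil u h = .cons r (p.takeUntil u h') := by
  simp [SimpleGraph.Walk.takeUntil, hne]

lemma wlen_cons' {v w x : V} (r : G.Adj v w) (p : G.Walk w x) :
    wlen ℓ (SimpleGraph.Walk.cons r p) = ℓ s(v, w) + wlen ℓ p := by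
  simp [wlen]

lemma term_le_detourSup : ∀ {v : V} (p : G.Walk v t), p.IsPath →
    ∀ (d : G.Dart) (_hd : d ∈ p.darts) (hm : d.fst ∈ p.support),
      wlen ℓ (p.takeUntil d.fst hm) + sval G ℓ t s(d.fst, d.snd) d.fst ≤ detourSup G ℓ t p
  | _, SimpleGraph.Walk.nil, _, d, hd, _ => by simp at hd
  | v, @SimpleGraph.Walk.cons _ _ _ w _ r p, hp, d, hd, hm => by
      obtain ⟨hp1, hp2⟩ := (SimpleGraph.Walk.cons_isPath_iff ..).mp hp
      rw [SimpleGraph.Walk.darts_cons, List.mem_cons] at hd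
      rcases hd with rfl | hd
      · rw [takeUntil_start']
        simpa [detourSup, wlen] using le_max_left _ _
      · have hfp : d.fst ∈ p.support := p.dart_fst_mem_support_of_mem_darts hd
        have hne : v ≠ d.fst := fun h => hp2 (h ▸ hfp)
        rw [takeUntil_cons_ne' r p hm hne hfp, wlen_cons', add_assoc]
        refine le_trans (add_le_add (le_refl _) (term_le_detourSup p hp1 d hd hfp)) ?_
        simp [detourSup]

lemma detourSup_le_of_constraints : ∀ {v : V} (p : G.Walk v t), p.IsPath → ∀ (a B : ℝ≥0∞),
    a + wlen ℓ p ≤ B →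
    (∀ (d : G.Dart) (_hd : d ∈ p.darts) (hm : d.fst ∈ p.support),
      a + (wlen ℓ (p.takeUntil d.fst hm) + sval G ℓ t s(d.fst, d.snd) d.fst) ≤ B) →
    a + detourSup G ℓ t p ≤ B
  | _, SimpleGraph.Walk.nil, _, a, B, hw, _ => by simpa [detourSup, wlen] using hw
  | v, @SimpleGraph.Walk.cons _ _ _ w _ r p, hp, a, B, hw, hd => by
      obtain ⟨hp1, hp2⟩ := (SimpleGraph.Walk.cons_isPath_iff ..).mp hp
      have hds : detourSup G ℓ t (SimpleGraph.Walk.cons r p) =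
          max (sval G ℓ t s(v, w) v) (ℓ s(v, w) + detourSup G ℓ t p) := by
        simp [detourSup]
      rw [hds, ← max_add_add_left]
      apply max_le
      · have h1 := hd ⟨(v, w), r⟩ (by simp) (by simp)
        simpa [takeUntil_start', wlen] using h1
      · rw [← add_assoc]
        apply detourSup_le_of_constraints p hp1 (a + ℓ s(v, w)) B
        · rw [add_assoc, ← wlen_cons' r p]; exact hw
        · intro d hdp hm
          have hne : v ≠ d.fst := fun h => hp2 (h ▸ hm)
          have h2 := hd d (by simp [SimpleGraph.Walk.darts_cons, hdp])
            (by simp [SimpleGraph.Walk.support_cons, hm])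
          have e := takeUntil_cons_ne' r p (by simp [SimpleGraph.Walk.support_cons, hm]) hne hm
          erw [e, wlen_cons', add_assoc] at h2
          rw [add_assoc]
          exact h2

end Aux

theorem pareto_optimal_orp {V : Type*} [Fintype V] [DecidableEq V]
    (G : SimpleGraph V) (ℓ : Sym2 V → ℝ≥0∞) (s t : V) (B : ℝ≥0∞)
    (hr : G.Reachable s t) (hB : pot G ℓ t s ≤ B) :
    (∃ P : G.Walk s t, P.IsPath ∧ rVal G ℓ t P ≤ B ∧
      ∀ Q : G.Walk s t, Q.IsPath → rVal G ℓ t Q ≤ B → wlen ℓ P ≤ wlen ℓ Q) ∧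
    (⨅ P : {P : G.Walk s t // P.IsPath ∧
        ∀ (d : G.Dart) (hd : d ∈ P.darts),
          wlen ℓ (P.takeUntil d.fst (P.dart_fst_mem_support_of_mem_darts hd)) +
            sval G ℓ t s(d.fst, d.snd) d.fst ≤ B}, wlen ℓ P.1) =
      ⨅ P : {P : G.Walk s t // P.IsPath ∧ rVal G ℓ t P ≤ B}, wlen ℓ P.1 := by
  classical
  haveI : G.LocallyFinite := fun v => (Set.toFinite _).fintype
  haveI hfin : Finite {p : G.Walk s t // p.IsPath} :=
    Finite.of_injective
      (fun p => (⟨p.1, p.2, p.2.length_lt⟩ :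
        {p : G.Walk s t // p.IsPath ∧ p.length < Fintype.card V}))
      (fun p q h => Subtype.ext (by simpa [Subtype.ext_iff] using h))
  obtain ⟨w0⟩ := hr
  haveI : Nonempty {p : G.Walk s t // p.IsPath} := ⟨⟨w0.toPath.1, w0.toPath.2⟩⟩
  -- minimizer of rVal over all paths
  obtain ⟨Pm, hPm⟩ := Finite.exists_min (fun p : {p : G.Walk s t // p.IsPath} => rVal G ℓ t p.1)
  have hPmB : rVal G ℓ t Pm.1 ≤ B := le_trans (le_iInf hPm) hB
  -- robust set
  haveI : Finite {P : G.Walk s t // P.IsPath ∧ rVal G ℓ t P ≤ B} :=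
    Finite.of_injective (fun p => (⟨p.1, p.2.1⟩ : {p : G.Walk s t // p.IsPath}))
      (fun p q h => Subtype.ext (by simpa [Subtype.ext_iff] using h))
  haveI : Nonempty {P : G.Walk s t // P.IsPath ∧ rVal G ℓ t P ≤ B} := ⟨⟨Pm.1, Pm.2, hPmB⟩⟩
  obtain ⟨Ps, hPs⟩ := Finite.exists_min
    (fun p : {P : G.Walk s t // P.IsPath ∧ rVal G ℓ t P ≤ B} => wlen ℓ p.1)
  -- robust implies feasible
  have feas : ∀ (P : G.Walk s t), P.IsPath → rVal G ℓ t P ≤ B →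
      ∀ (d : G.Dart) (hd : d ∈ P.darts),
        wlen ℓ (P.takeUntil d.fst (P.dart_fst_mem_support_of_mem_darts hd)) +
          sval G ℓ t s(d.fst, d.snd) d.fst ≤ B := by
    intro P hP hPB d hd
    exact le_trans (term_le_detourSup P hP d hd _) (le_trans (le_max_right _ _) hPB)
  refine ⟨⟨Ps.1, Ps.2.1, Ps.2.2, fun Q hQ hQB => hPs ⟨Q, hQ, hQB⟩⟩, ?_⟩
  -- feasible set
  haveI : Finite {P : G.Walk s t // P.IsPath ∧
      ∀ (d : G.Dart) (hd : d ∈ P.darts),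
        wlen ℓ (P.takeUntil d.fst (P.dart_fst_mem_support_of_mem_darts hd)) +
          sval G ℓ t s(d.fst, d.snd) d.fst ≤ B} :=
    Finite.of_injective (fun p => (⟨p.1, p.2.1⟩ : {p : G.Walk s t // p.IsPath}))
      (fun p q h => Subtype.ext (by simpa [Subtype.ext_iff] using h))
  haveI : Nonempty {P : G.Walk s t // P.IsPath ∧
      ∀ (d : G.Dart) (hd : d ∈ P.darts),
        wlen ℓ (P.takeUntil d.fst (P.dart_fst_mem_support_of_mem_darts hd)) +
          sval G ℓ t s(d.fst, d.snd) d.fst ≤ B} :=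
    ⟨⟨Ps.1, Ps.2.1, feas Ps.1 Ps.2.1 Ps.2.2⟩⟩
  obtain ⟨Pf, hPf⟩ := Finite.exists_min
    (fun p : {P : G.Walk s t // P.IsPath ∧
      ∀ (d : G.Dart) (hd : d ∈ P.darts),
        wlen ℓ (P.takeUntil d.fst (P.dart_fst_mem_support_of_mem_darts hd)) +
          sval G ℓ t s(d.fst, d.snd) d.fst ≤ B} => wlen ℓ p.1)
  have hwB : wlen ℓ Pf.1 ≤ B :=
    le_trans (hPf ⟨Ps.1, Ps.2.1, feas Ps.1 Ps.2.1 Ps.2.2⟩)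
      (le_trans (le_max_left _ _) Ps.2.2)
  have hdB : detourSup G ℓ t Pf.1 ≤ B := by
    have := detourSup_le_of_constraints Pf.1 Pf.2.1 0 B (by simpa using hwB)
      (fun d hd hm => by simpa using Pf.2.2 d hd)
    simpa using this
  have hfB : rVal G ℓ t Pf.1 ≤ B := max_le hwB hdB
  apply le_antisymm
  · exact le_iInf fun q => iInf_le_of_le ⟨q.1, q.2.1, feas q.1 q.2.1 q.2.2⟩ le_rfl
  · exact le_trans (iInf_le _ ⟨Pf.1, Pf.2.1, hfB⟩) (le_iInf hPf)
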